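/- Let δ ∈ (0,1/2) and let I(1,t) be the first t items of a list I of items in (0,1]. Suppose I_ℓ(1,t) and I_s(1,t) denote the large (size ≥ δ) and small (size < δ) items in I(1,t). Start from any optimal packing of I_ℓ(1,t) and pack I_s(1,t) greedily by Next-Fit into the residual bin space, opening new bins when necessary. Then the resulting packing of I(1,t) uses at most max{ Opt(I_ℓ(1,t)), W(I(1,t))/(1−δ) + 1 } bins, where W denotes total weight. -/

import Mathlib

/-- A packing of a bin packing instance `I` is a list of bins whose concatenation
is a permutation of `I` and in which every bin has total size at most 1. -/
def IsPackingOf (I : List ℝ) (P : List (List ℝ)) : Prop :=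
  P.flatten.Perm I ∧ ∀ b ∈ P, b.sum ≤ 1

/-- The optimal number of unit-capacity bins needed to pack the items of `I`. -/
noncomputable def bpOpt (I : List ℝ) : ℕ :=
  sInf {k | ∃ P : List (List ℝ), IsPackingOf I P ∧ P.length = k}

/-- Greedily pack the items (third argument) by Next-Fit into the residual space of the
open bins (second argument, processed in order), opening new bins when necessary;
`closed` accumulates the loads of bins already passed. Returns the loads of all bins. -/
noncomputable def nfFillAux : List ℝ → List ℝ → List ℝ → List ℝ
  | closed, opens, [] => closed ++ opens
  | closed, [], x :: xs => nfFillAux closed [x] xs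
  | closed, b :: bs, x :: xs =>
      if b + x ≤ 1 then nfFillAux closed ((b + x) :: bs) xs
      else nfFillAux (closed ++ [b]) bs (x :: xs)
  termination_by _ opens items => (items.length, opens.length)

/-- Starting from any optimal packing `P` of the large items (size ≥ δ) of the first
`t` items and packing the small items (size < δ) greedily by Next-Fit into the
residual bin space, the resulting packing uses at most
`max { Opt(I_ℓ(1,t)), W(I(1,t))/(1-δ) + 1 }` bins. -/
lemma lemA (δ : ℝ) (hδ1 : 0 < δ) : ∀ n (closed opens items : List ℝ),
    2 * items.length + opens.length ≤ n →
    (∀ b ∈ closed, 1 - δ ≤ b) → (∀ b ∈ opens, 0 ≤ b) →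
    (∀ x ∈ items, 0 < x ∧ x < δ) →
    (nfFillAux closed opens items).length = closed.length + opens.length ∨
    (((nfFillAux closed opens items).length : ℝ) - 1) * (1 - δ) ≤
      closed.sum + opens.sum + items.sum := by
  intro n
  induction n with
  | zero =>
      intro closed opens items hn hc ho hi
      have : items = [] := by
        cases items with
        | nil => rfl
        | cons a l => simp at hn
      subst this
      have : opens = [] := by
        cases opens with
        | nil => rfl
        | cons a l => simp at hn
      subst this
      left; simp [nfFillAux]
  | succ n ih =>
      intro closed opens items hn hc ho hi
      cases items with
      | nil => left; simp [nfFillAux]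
      | cons x xs =>
        have hx := hi x (by simp)
        cases opens with
        | nil =>
          rw [nfFillAux]
          have hrec := ih closed [x] xs (by simp at hn ⊢; omega)
            hc (by intro b hb; simp at hb; subst hb; exact hx.1.le)
            (fun y hy => hi y (by simp [hy]))
          rcases hrec with h | h
          · right
            have hclen : (closed.length : ℝ) * (1 - δ) ≤ closed.sum := by
              have := List.card_nsmul_le_sum (l := closed) (n := 1 - δ) hc
              simpa [nsmul_eq_mul] using this
            have hxs : 0 ≤ xs.sum :=
              List.sum_nonneg fun y hy => (hi y (by simp [hy])).1.le
            have : ((nfFillAux closed [x] xs).length : ℝ) = closed.length + 1 := by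
              rw [h]; push_cast; simp
            rw [this]
            simp only [List.sum_nil, List.sum_cons]
            nlinarith [hx.1]
          · right
            simp only [List.sum_nil, List.sum_cons] at h ⊢
            linarith
        | cons b bs =>
          rw [nfFillAux]
          by_cases hfit : b + x ≤ 1
          · rw [if_pos hfit]
            have hrec := ih closed ((b + x) :: bs) xs (by simp at hn ⊢; omega)
              hc (by
                intro y hy; simp at hy
                rcases hy with rfl | hy
                · have := ho b (by simp); nlinarith [hx.1]
                · exact ho y (by simp [hy]))
              (fun y hy => hi y (by simp [hy]))
            rcases hrec with h | h
            · left; simpa using h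
            · right
              simp only [List.sum_cons] at h ⊢
              linarith
          · rw [if_neg hfit]
            have hb : 1 - δ ≤ b := by push_neg at hfit; nlinarith [hx.2]
            have hrec := ih (closed ++ [b]) bs (x :: xs) (by simp at hn ⊢; omega)
              (by intro y hy; simp at hy; rcases hy with hy | rfl
                  exacts [hc y hy, hb])
              (fun y hy => ho y (by simp [hy])) hi
            rcases hrec with h | h
            · left; simp at h ⊢; omega
            · right
              simp only [List.sum_append, List.sum_cons, List.sum_nil] at h ⊢
              linarith

lemma filter_sum_split (δ : ℝ) (l : List ℝ) :
    (l.filter (fun x => decide (δ ≤ x))).sum +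
      (l.filter (fun x => decide (x < δ))).sum = l.sum := by
  induction l with
  | nil => simp
  | cons a l ih =>
    by_cases h : δ ≤ a
    · simp [List.filter_cons, h, not_lt.mpr h, ← ih]; ring
    · simp [List.filter_cons, h, not_le.mp h, ← ih]; ring

theorem nf_fill_bound (δ : ℝ) (hδ : 0 < δ ∧ δ < 1 / 2) (I : List ℝ)
    (hI : ∀ x ∈ I, 0 < x ∧ x ≤ 1) (t : ℕ)
    (L S : List ℝ)
    (hL : L = (I.take t).filter (fun x => decide (δ ≤ x)))
    (hS : S = (I.take t).filter (fun x => decide (x < δ)))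
    (P : List (List ℝ)) (hP : IsPackingOf L P) (hPopt : P.length = bpOpt L) :
    ((nfFillAux [] (P.map List.sum) S).length : ℝ) ≤
      max ((bpOpt L : ℝ)) ((I.take t).sum / (1 - δ) + 1) := by
  obtain ⟨hδ0, hδhalf⟩ := hδ
  have hδ1 : (0:ℝ) < 1 - δ := by linarith
  have hItake : ∀ x ∈ I.take t, 0 < x ∧ x ≤ 1 := fun x hx => hI x (List.mem_of_mem_take hx)
  -- positivity of bin loads
  have hopens : ∀ b ∈ P.map List.sum, 0 ≤ b := by
    intro b hb
    simp only [List.mem_map] at hb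
    obtain ⟨c, hc, rfl⟩ := hb
    refine List.sum_nonneg fun y hy => ?_
    have hyL : y ∈ L := hP.1.mem_iff.mp (List.mem_flatten.mpr ⟨c, hc, hy⟩)
    rw [hL] at hyL
    exact (hItake y (List.mem_of_mem_filter hyL)).1.le
  have hSmall : ∀ x ∈ S, 0 < x ∧ x < δ := by
    intro x hx
    rw [hS] at hx
    have h1 := List.of_mem_filter hx
    simp at h1
    exact ⟨(hItake x (List.mem_of_mem_filter hx)).1, h1⟩
  have key := lemA δ hδ0 (2 * S.length + (P.map List.sum).length) [] (P.map List.sum) S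
    le_rfl (by simp) hopens hSmall
  have hsum : (P.map List.sum).sum = L.sum := by
    rw [← List.sum_flatten]
    exact hP.1.sum_eq
  have hW : L.sum + S.sum = (I.take t).sum := by
    rw [hL, hS]; exact filter_sum_split δ (I.take t)
  rcases key with h | h
  · refine le_trans ?_ (le_max_left _ _)
    rw [h]
    simp [hPopt]
  · refine le_trans ?_ (le_max_right _ _)
    simp only [List.sum_nil, List.length_nil, Nat.cast_zero, zero_add] at h
    rw [hsum] at h
    rw [hW] at h
    have h2 := (le_div_iff₀ hδ1).mpr h
    linarith
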